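/- Let k ≥ 1 and t ≥ 1 be integers and let c be a k-edge-colouring of the complete graph K_{2kt+1}. Suppose that for every j ∈ {1,…,k} and every set S of j colours from {1,…,k}, the number of edges whose colour lies in S is strictly greater than C(2jt, 2) = (2jt)(2jt−1)/2. Then K_{2kt+1} contains a spanning tree in which every colour appears on exactly 2t edges. -/

import Mathlib

open Finset SimpleGraph

set_option linter.unusedSectionVars false
open scoped Classical
noncomputable section CBT

variable {V : Type*} [Fintype V] [DecidableEq V] [LinearOrder V]

/-- The graph of an edge finset. -/
def Gr (F : Finset (Sym2 V)) : SimpleGraph V := SimpleGraph.fromEdgeSet ↑F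

/-- `F` is a forest-edge-set: acyclic and no loops. -/
def Good (F : Finset (Sym2 V)) : Prop := (Gr F).IsAcyclic ∧ ∀ e ∈ F, ¬ e.IsDiag

lemma Gr_adj {F : Finset (Sym2 V)} {x y : V} : (Gr F).Adj x y ↔ s(x, y) ∈ F ∧ x ≠ y := by
  simp [Gr, SimpleGraph.fromEdgeSet_adj]

lemma good_empty : Good (∅ : Finset (Sym2 V)) := by
  constructor
  · have : Gr (∅ : Finset (Sym2 V)) = ⊥ := by
      simp [Gr]
    rw [this]; exact SimpleGraph.isAcyclic_bot
  · simp

lemma good_subset {F F' : Finset (Sym2 V)} (h : F' ⊆ F) (hF : Good F) : Good F' := by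
  refine ⟨?_, fun e he => hF.2 e (h he)⟩
  intro v c hc
  have hle : ∀ e ∈ c.edges, e ∈ (Gr F).edgeSet := by
    intro e he
    have := c.edges_subset_edgeSet he
    rw [Gr, SimpleGraph.edgeSet_fromEdgeSet] at this ⊢
    exact ⟨h this.1, this.2⟩
  exact hF.1 (c.transfer _ hle) (hc.transfer hle)

/-- Adding an edge joining two non-reachable vertices preserves acyclicity. -/
lemma good_insert {F : Finset (Sym2 V)} (hF : Good F) {a b : V} (hab : a ≠ b)
    (hreach : ¬ (Gr F).Reachable a b) : Good (insert s(a, b) F) := by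
  by_cases hmem : s(a, b) ∈ F
  · rwa [Finset.insert_eq_self.2 hmem]
  refine ⟨?_, ?_⟩
  swap
  · intro e he
    rcases Finset.mem_insert.1 he with rfl | he
    · simpa using hab
    · exact hF.2 e he
  intro v c hc
  by_cases he : s(a, b) ∈ c.edges
  · -- the cycle uses the new edge; get reachability after deleting it
    have hcyc : ∃ (u : V) (p : (Gr (insert s(a,b) F)).Walk u u), p.IsCycle ∧ s(a, b) ∈ p.edges :=
      ⟨v, c, hc, he⟩
    rw [← SimpleGraph.adj_and_reachable_delete_edges_iff_exists_cycle] at hcyc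
    apply hreach
    refine hcyc.2.mono ?_
    intro x y hxy
    simp only [SimpleGraph.deleteEdges_adj] at hxy
    rw [Gr_adj]
    rcases hxy with ⟨hxy1, hxy2⟩
    rw [Gr_adj] at hxy1
    refine ⟨?_, hxy1.2⟩
    rcases Finset.mem_insert.1 hxy1.1 with h1 | h1
    · exfalso; exact hxy2 (by simp [Gr, SimpleGraph.fromEdgeSet_adj, h1, hxy1.2])
    · exact h1
  · -- cycle avoids the new edge; transfer it down to `Gr F`
    have hle : ∀ e ∈ c.edges, e ∈ (Gr F).edgeSet := by
      intro e hec
      have := c.edges_subset_edgeSet hec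
      rw [Gr, SimpleGraph.edgeSet_fromEdgeSet] at this ⊢
      rcases Finset.mem_insert.1 (by exact_mod_cast this.1) with rfl | h1
      · exact absurd hec he
      · exact ⟨by exact_mod_cast h1, this.2⟩
    exact hF.1 (c.transfer _ hle) (hc.transfer hle)


/-- The connected component of `x` as a finset. -/
def cpt (F : Finset (Sym2 V)) (x : V) : Finset V :=
  Finset.univ.filter (fun y => (Gr F).Reachable x y)

lemma mem_cpt_self (F : Finset (Sym2 V)) (x : V) : x ∈ cpt F x := by
  simp only [cpt, Finset.mem_filter, Finset.mem_univ, true_and]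
  exact SimpleGraph.Reachable.refl x

lemma mem_cpt_iff {F : Finset (Sym2 V)} {x y : V} :
    y ∈ cpt F x ↔ (Gr F).Reachable x y := by simp [cpt]

lemma cpt_eq_of_reach {F : Finset (Sym2 V)} {x y : V} (h : (Gr F).Reachable x y) :
    cpt F x = cpt F y := by
  ext z; simp only [mem_cpt_iff]
  exact ⟨fun hz => h.symm.trans hz, fun hz => h.trans hz⟩

/-- The representative (minimum) of the component of `x`. -/
def rep (F : Finset (Sym2 V)) (x : V) : V := (cpt F x).min' ⟨x, mem_cpt_self F x⟩

lemma rep_mem_cpt (F : Finset (Sym2 V)) (x : V) : rep F x ∈ cpt F x :=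
  Finset.min'_mem _ _

lemma reach_rep (F : Finset (Sym2 V)) (x : V) : (Gr F).Reachable x (rep F x) :=
  mem_cpt_iff.1 (rep_mem_cpt F x)

lemma rep_eq_of_reach {F : Finset (Sym2 V)} {x y : V} (h : (Gr F).Reachable x y) :
    rep F x = rep F y := by
  simp only [rep, cpt_eq_of_reach h]

lemma rep_rep (F : Finset (Sym2 V)) (x : V) : rep F (rep F x) = rep F x :=
  (rep_eq_of_reach (reach_rep F x)).symm

/-- The finset of component representatives. -/
def reps (F : Finset (Sym2 V)) : Finset V := Finset.univ.filter (fun v => rep F v = v)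

lemma rep_mem_reps (F : Finset (Sym2 V)) (x : V) : rep F x ∈ reps F := by
  simp [reps, rep_rep]

lemma rep_eq_iff_mem_cpt {F : Finset (Sym2 V)} {x : V} {r : V} (hr : r ∈ reps F) :
    rep F x = r ↔ x ∈ cpt F r := by
  constructor
  · intro h
    rw [mem_cpt_iff, ← h]
    exact (reach_rep F x).symm
  · intro h
    rw [mem_cpt_iff] at h
    rw [rep_eq_of_reach h.symm]
    exact (Finset.mem_filter.1 hr).2

/-- Vertex count as a sum over components. -/
lemma card_univ_eq_sum_cpt (F : Finset (Sym2 V)) :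
    Fintype.card V = ∑ r ∈ reps F, (cpt F r).card := by
  rw [← Finset.card_univ]
  refine Finset.card_eq_sum_card_fiberwise (fun x _ => rep_mem_reps F x) |>.trans ?_
  refine Finset.sum_congr rfl fun r hr => ?_
  congr 1
  ext x
  simp only [Finset.mem_filter, Finset.mem_univ, true_and]
  exact rep_eq_iff_mem_cpt hr

/-- If every adjacency of `Gr F2` joins `Gr F1`-reachable vertices, reachability transfers. -/
lemma reach_mono_of_adj {F1 F2 : Finset (Sym2 V)}
    (h : ∀ ⦃x y : V⦄, (Gr F2).Adj x y → (Gr F1).Reachable x y) {x y : V}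
    (hr : (Gr F2).Reachable x y) : (Gr F1).Reachable x y := by
  obtain ⟨w⟩ := hr
  induction w with
  | nil => exact SimpleGraph.Reachable.refl _
  | cons hadj _ ih => exact (h hadj).trans ih

/-- Finer partitions have at least as many parts. -/
lemma card_reps_le {F1 F2 : Finset (Sym2 V)}
    (h : ∀ ⦃x y : V⦄, (Gr F2).Adj x y → (Gr F1).Reachable x y) :
    (reps F1).card ≤ (reps F2).card := by
  refine Finset.card_le_card_of_injOn (rep F2) (fun r _ => rep_mem_reps F2 r) ?_
  intro r hr r' hr' hrr
  have h1 : (Gr F1).Reachable r r' := by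
    have a1 : (Gr F1).Reachable r (rep F2 r) := reach_mono_of_adj h (reach_rep F2 r)
    have a2 : (Gr F1).Reachable r' (rep F2 r') := reach_mono_of_adj h (reach_rep F2 r')
    rw [hrr] at a1
    exact a1.trans a2.symm
  have e1 : rep F1 r = r := (Finset.mem_filter.1 hr).2
  have e2 : rep F1 r' = r' := (Finset.mem_filter.1 hr').2
  rw [← e1, ← e2]
  exact rep_eq_of_reach h1


/-- A chosen path from `x` to its component representative. -/
def pth (F : Finset (Sym2 V)) (x : V) : (Gr F).Path x (rep F x) :=
  (reach_rep F x).some.toPath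

/-- The second vertex on the path from `x` to its representative. -/
def nx (F : Finset (Sym2 V)) (x : V) : V := (pth F x).1.getVert 1

lemma path_eq {F : Finset (Sym2 V)} (hF : Good F) {x y : V} {p q : (Gr F).Walk x y}
    (hp : p.IsPath) (hq : q.IsPath) : p = q :=
  congrArg Subtype.val (hF.1.path_unique ⟨p, hp⟩ ⟨q, hq⟩)

lemma nx_spec {F : Finset (Sym2 V)} (hF : Good F) {x : V} (q : (Gr F).Walk x (rep F x))
    (hq : q.IsPath) : nx F x = q.getVert 1 := by
  unfold nx
  rw [path_eq hF (pth F x).2 hq]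

lemma adj_nx {F : Finset (Sym2 V)} (hF : Good F) {x : V} (hx : rep F x ≠ x) :
    (Gr F).Adj x (nx F x) := by
  have hlen : (pth F x).1.length ≠ 0 := fun h => hx (SimpleGraph.Walk.eq_of_length_eq_zero h).symm
  have := (pth F x).1.adj_getVert_succ (i := 0) (Nat.pos_of_ne_zero hlen)
  rwa [SimpleGraph.Walk.getVert_zero] at this

lemma edge_nx_mem {F : Finset (Sym2 V)} (hF : Good F) {x : V} (hx : rep F x ≠ x) :
    s(x, nx F x) ∈ F := (Gr_adj.1 (adj_nx hF hx)).1

/-- If `x` is adjacent to its representative, then `nx x` is the representative. -/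
lemma nx_of_adj_rep {F : Finset (Sym2 V)} (hF : Good F) {x y : V} (hadj : (Gr F).Adj x y)
    (h : rep F x = y) : nx F x = y := by
  subst h
  have hq : (SimpleGraph.Walk.cons hadj SimpleGraph.Walk.nil).IsPath := by
    rw [SimpleGraph.Walk.cons_isPath_iff]
    exact ⟨SimpleGraph.Walk.IsPath.nil, by simp [hadj.ne]⟩
  rw [nx_spec hF _ hq]
  simp

/-- Every forest edge is of the form `s(x, nx x)`. -/
lemma exists_nx_edge {F : Finset (Sym2 V)} (hF : Good F) {e : Sym2 V} (he : e ∈ F) :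
    ∃ x : V, rep F x ≠ x ∧ s(x, nx F x) = e := by
  induction e using Sym2.ind with
  | _ a b =>
  have hab : a ≠ b := fun h => hF.2 _ he (by simp [h])
  have hadj : (Gr F).Adj a b := Gr_adj.2 ⟨he, hab⟩
  have hrab : rep F a = rep F b := rep_eq_of_reach hadj.reachable
  by_cases ha : rep F a = a
  · -- a is the rep; use b
    refine ⟨b, ?_, ?_⟩
    · rw [← hrab, ha]; exact hab
    · rw [nx_of_adj_rep hF hadj.symm (by rw [← hrab, ha]), Sym2.eq_swap]
  by_cases hb : rep F b = b
  · refine ⟨a, ha, ?_⟩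
    rw [nx_of_adj_rep hF hadj (by rw [hrab, hb])]
  -- main case
  by_cases hsupp : b ∈ (pth F a).1.support
  · refine ⟨a, ha, ?_⟩
    have hQ : ((pth F a).1.takeUntil b hsupp).IsPath := (pth F a).2.takeUntil hsupp
    have hsingle : (SimpleGraph.Walk.cons hadj SimpleGraph.Walk.nil).IsPath := by
      rw [SimpleGraph.Walk.cons_isPath_iff]
      exact ⟨SimpleGraph.Walk.IsPath.nil, by simp [hab]⟩
    have hQeq : (pth F a).1.takeUntil b hsupp = SimpleGraph.Walk.cons hadj SimpleGraph.Walk.nil :=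
      path_eq hF hQ hsingle
    have hP : (pth F a).1 =
        SimpleGraph.Walk.cons hadj (SimpleGraph.Walk.nil.append ((pth F a).1.dropUntil b hsupp)) := by
      conv_lhs => rw [← (pth F a).1.take_spec hsupp]
      rw [hQeq, SimpleGraph.Walk.cons_append]
    have : nx F a = b := by
      unfold nx
      rw [hP]
      simp [SimpleGraph.Walk.getVert_cons_succ]
    rw [this]
  · refine ⟨b, hb, ?_⟩
    have hq : (SimpleGraph.Walk.cons hadj.symm ((pth F a).1.copy rfl hrab)).IsPath := by
      rw [SimpleGraph.Walk.cons_isPath_iff]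
      refine ⟨(SimpleGraph.Walk.isPath_copy _ _ _).2 (pth F a).2, ?_⟩
      rwa [SimpleGraph.Walk.support_copy]
    have : nx F b = a := by
      rw [nx_spec hF _ hq]
      simp [SimpleGraph.Walk.getVert_cons_succ]
    rw [this, Sym2.eq_swap]


/-- Injectivity of `x ↦ s(x, nx x)` on non-representatives. -/
lemma nx_edge_injOn {F : Finset (Sym2 V)} (hF : Good F) {x y : V}
    (hx : rep F x ≠ x) (hy : rep F y ≠ y) (hxy : x ≠ y)
    (heq : s(x, nx F x) = s(y, nx F y)) : False := by
  rcases Sym2.eq_iff.1 heq with ⟨h1, h2⟩ | ⟨h1, h2⟩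
  · exact hxy h1
  -- h1 : x = nx F y, h2 : nx F x = y
  obtain ⟨z, hadj, R, hP⟩ := SimpleGraph.Walk.exists_eq_cons_of_ne (Ne.symm hx) (pth F x).1
  have hz : z = y := by
    have hnx : nx F x = (pth F x).1.getVert 1 := rfl
    rw [hP, SimpleGraph.Walk.getVert_cons_succ, SimpleGraph.Walk.getVert_zero] at hnx
    rw [← hnx, h2]
  rw [← hz] at hy h1
  rw [← hz] at hxy
  have hRpath : R.IsPath ∧ x ∉ R.support := by
    have := (pth F x).2
    rw [hP, SimpleGraph.Walk.cons_isPath_iff] at this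
    exact this
  have hrxy : rep F x = rep F z := rep_eq_of_reach hadj.reachable
  rcases Nat.eq_zero_or_pos R.length with h0 | hpos
  · exact hy (by rw [← hrxy, ← SimpleGraph.Walk.eq_of_length_eq_zero h0])
  · have hnxy : nx F z = R.getVert 1 := by
      rw [nx_spec hF (R.copy rfl hrxy) (by
        rw [SimpleGraph.Walk.isPath_copy]; exact hRpath.1)]
      rw [SimpleGraph.Walk.getVert_copy]
    apply hRpath.2
    rw [SimpleGraph.Walk.mem_support_iff_exists_getVert]
    exact ⟨1, by rw [← hnxy, ← h1], hpos⟩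

variable [Nonempty V]

/-- The edge count of a forest: `|F| + #components = |V|`. -/
lemma card_forest {F : Finset (Sym2 V)} (hF : Good F) :
    F.card + (reps F).card = Fintype.card V := by
  classical
  set NR := Finset.univ.filter (fun v : V => rep F v ≠ v) with hNR
  have hsplit : (reps F).card + NR.card = Fintype.card V := by
    rw [← Finset.card_univ, hNR, reps]
    exact Finset.card_filter_add_card_filter_not _
  have hle : NR.card ≤ F.card := by
    refine Finset.card_le_card_of_injOn (fun v => s(v, nx F v)) ?_ ?_
    · intro v hv
      exact edge_nx_mem hF (Finset.mem_filter.1 hv).2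
    · intro a ha b hb hab
      by_contra hne
      exact nx_edge_injOn hF (Finset.mem_filter.1 ha).2 (Finset.mem_filter.1 hb).2 hne hab
  have hge : F.card ≤ NR.card := by
    have hch : ∀ e ∈ F, ∃ x : V, rep F x ≠ x ∧ s(x, nx F x) = e := fun e he =>
      exists_nx_edge hF he
    choose! f hf1 hf2 using hch
    refine Finset.card_le_card_of_injOn f ?_ ?_
    · intro e he
      exact Finset.mem_filter.2 ⟨Finset.mem_univ _, hf1 e he⟩
    · intro e he e' he' hee
      rw [← hf2 e he, ← hf2 e' he', hee]
  omega

/-- Matroid exchange property for forests. -/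
lemma exchange {F1 F2 : Finset (Sym2 V)} (h1 : Good F1) (h2 : Good F2)
    (hlt : F1.card < F2.card) : ∃ e ∈ F2, e ∉ F1 ∧ Good (insert e F1) := by
  by_contra hcon
  push_neg at hcon
  have hadjreach : ∀ ⦃x y : V⦄, (Gr F2).Adj x y → (Gr F1).Reachable x y := by
    intro x y hadj
    rw [Gr_adj] at hadj
    by_cases hmem : s(x, y) ∈ F1
    · exact ((Gr_adj).2 ⟨hmem, hadj.2⟩ : (Gr F1).Adj x y).reachable
    · by_contra hre
      exact hcon _ hadj.1 hmem (good_insert h1 hadj.2 hre)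
  have := card_reps_le hadjreach
  have c1 := card_forest h1
  have c2 := card_forest h2
  omega

/-- Extend an acyclic set to the size of another acyclic set. -/
lemma extend_aux (n : ℕ) : ∀ (C D : Finset (Sym2 V)), Good C → Good D →
    D.card ≤ C.card + n →
    ∃ C', C ⊆ C' ∧ C' ⊆ C ∪ D ∧ Good C' ∧ D.card ≤ C'.card := by
  induction n with
  | zero => exact fun C D hC hD h => ⟨C, Finset.Subset.refl C, Finset.subset_union_left, hC, by omega⟩
  | succ n ih =>
    intro C D hC hD h
    rcases le_or_gt D.card C.card with hle | hlt
    · exact ⟨C, Finset.Subset.refl C, Finset.subset_union_left, hC, hle⟩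
    · obtain ⟨e, heD, heC, hGood⟩ := exchange hC hD hlt
      obtain ⟨C', hsub1, hsub2, hG, hcard⟩ := ih (insert e C) D hGood hD
        (by rw [Finset.card_insert_of_notMem heC]; omega)
      refine ⟨C', (Finset.subset_insert e C).trans hsub1, ?_, hG, hcard⟩
      refine hsub2.trans ?_
      intro a ha
      rcases Finset.mem_union.1 ha with ha | ha
      · rcases Finset.mem_insert.1 ha with rfl | ha
        · exact Finset.mem_union_right _ heD
        · exact Finset.mem_union_left _ ha
      · exact Finset.mem_union_right _ ha


lemma sum_sq_le {α : Type*} [DecidableEq α] (s : Finset α) (f : α → ℕ)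
    (hf : ∀ a ∈ s, 1 ≤ f a) :
    ∑ a ∈ s, (f a * f a - f a) ≤ (∑ a ∈ s, (f a - 1)) * ((∑ a ∈ s, (f a - 1)) + 1) := by
  classical
  induction s using Finset.induction_on with
  | empty => simp
  | insert _ _ ha ih =>
    rename_i a s'
    have hfa : 1 ≤ f a := hf a (Finset.mem_insert_self a s')
    have ih' := ih (fun b hb => hf b (Finset.mem_insert_of_mem hb))
    rw [Finset.sum_insert ha, Finset.sum_insert ha]
    obtain ⟨y, hy⟩ := Nat.exists_eq_add_of_le hfa
    set S := ∑ b ∈ s', (f b - 1) with hS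
    set L := ∑ b ∈ s', (f b * f b - f b) with hL
    have e1 : f a * f a - f a = y * y + y := by
      rw [hy]; cases y <;> ring_nf <;> omega
    have e2 : f a - 1 = y := by omega
    rw [e1, e2]
    have e3 : (y + S) * (y + S + 1) = (y * y + y) + S * (S + 1) + 2 * (y * S) := by ring
    omega

/-- The set of unordered pairs of distinct vertices joined by `Gr F`. -/
def prs (F : Finset (Sym2 V)) : Finset (Sym2 V) :=
  Finset.univ.filter (fun p : Sym2 V =>
    ¬ p.IsDiag ∧ ∀ x y : V, p = s(x, y) → (Gr F).Reachable x y)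

/-- Counting: unordered reachable pairs of a forest are at most `C(r+1,2)`. -/
lemma card_prs_le {F : Finset (Sym2 V)} (hF : Good F) :
    (prs F).card ≤ (F.card + 1).choose 2 := by
  classical
  set D : Finset (V × V) := Finset.univ.filter
    (fun z : V × V => z.1 ≠ z.2 ∧ (Gr F).Reachable z.1 z.2) with hD
  -- D fibered over components
  have step1 : D.card = ∑ r ∈ reps F, ((cpt F r).card * (cpt F r).card - (cpt F r).card) := by
    rw [Finset.card_eq_sum_card_fiberwise (f := fun z : V × V => rep F z.1)
      (t := reps F) (fun z _ => rep_mem_reps F z.1)]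
    refine Finset.sum_congr rfl fun r hr => ?_
    rw [← Finset.offDiag_card]
    congr 1
    ext ⟨a, b⟩
    simp only [Finset.mem_filter, hD, Finset.mem_univ, true_and, Finset.mem_offDiag]
    constructor
    · rintro ⟨⟨hne, hreach⟩, hrep⟩
      refine ⟨(rep_eq_iff_mem_cpt hr).1 hrep, ?_, hne⟩
      have : rep F b = r := by rw [← rep_eq_of_reach hreach]; exact hrep
      exact (rep_eq_iff_mem_cpt hr).1 this
    · rintro ⟨har, hbr, hne⟩
      rw [mem_cpt_iff] at har hbr
      exact ⟨⟨hne, har.symm.trans hbr⟩, rep_eq_of_reach har.symm ▸ (Finset.mem_filter.1 hr).2⟩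
  -- |F| as a sum over components
  have hv1 : ∀ r ∈ reps F, 1 ≤ (cpt F r).card :=
    fun r _ => Finset.card_pos.2 ⟨r, mem_cpt_self F r⟩
  have step2 : F.card = ∑ r ∈ reps F, ((cpt F r).card - 1) := by
    have h1 := card_forest hF
    have h2 := card_univ_eq_sum_cpt F
    have h3 : ∑ r ∈ reps F, ((cpt F r).card - 1) + (reps F).card = ∑ r ∈ reps F, (cpt F r).card := by
      rw [Finset.card_eq_sum_ones (reps F), ← Finset.sum_add_distrib]
      exact Finset.sum_congr rfl fun r hr => Nat.sub_add_cancel (hv1 r hr)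
    omega
  have step3 : D.card ≤ F.card * (F.card + 1) := by
    rw [step1, step2]
    exact sum_sq_le _ _ hv1
  -- 2 * |prs| = |D|
  have step4 : D.card = (prs F).card * 2 := by
    rw [Finset.card_eq_sum_card_fiberwise (f := fun z : V × V => s(z.1, z.2)) (t := prs F) ?_]
    · rw [← Finset.sum_const_nat (m := 2) ?_]
      intro p hp
      induction p using Sym2.ind with
      | _ a b =>
        have hab : a ≠ b := fun h =>
          (Finset.mem_filter.1 hp).2.1 (by rw [h]; exact Sym2.mk_isDiag_iff.2 rfl)
        have hreach : (Gr F).Reachable a b := (Finset.mem_filter.1 hp).2.2 a b rfl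
        have : Finset.filter (fun z : V × V => s(z.1, z.2) = s(a, b)) D = {(a, b), (b, a)} := by
          ext ⟨u, v⟩
          simp only [Finset.mem_filter, hD, Finset.mem_univ, true_and, Finset.mem_insert,
            Finset.mem_singleton, Prod.mk.injEq]
          constructor
          · rintro ⟨-, huv⟩
            rcases Sym2.eq_iff.1 huv with ⟨rfl, rfl⟩ | ⟨rfl, rfl⟩
            · exact Or.inl ⟨rfl, rfl⟩
            · exact Or.inr ⟨rfl, rfl⟩
          · rintro (⟨rfl, rfl⟩ | ⟨rfl, rfl⟩)
            · exact ⟨⟨hab, hreach⟩, rfl⟩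
            · exact ⟨⟨hab.symm, hreach.symm⟩, Sym2.eq_swap⟩
        rw [this]
        rw [Finset.card_insert_of_notMem (by simp [hab]), Finset.card_singleton]
    · intro z hz
      rw [Finset.mem_coe, Finset.mem_filter] at hz
      refine Finset.mem_filter.2 ⟨Finset.mem_univ _, ?_, ?_⟩
      · rw [Sym2.mk_isDiag_iff]; exact hz.2.1
      · intro x y hxy
        rcases Sym2.eq_iff.1 hxy with ⟨h1, h2⟩ | ⟨h1, h2⟩
        · rw [← h1, ← h2]; exact hz.2.2
        · rw [← h1, ← h2]; exact hz.2.2.symm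
  -- arithmetic
  have harith : (F.card + 1).choose 2 * 2 = F.card * (F.card + 1) := by
    rw [Nat.choose_two_right]
    have h2 : 2 ∣ (F.card + 1) * F.card := by
      rcases Nat.even_mul_succ_self F.card with ⟨c, hc⟩
      exact ⟨c, by rw [mul_comm (F.card + 1) F.card]; omega⟩
    rw [Nat.add_sub_cancel, Nat.div_mul_cancel h2, mul_comm]
  omega

/-- From an edge-count lower bound to a rank lower bound. -/
lemma rank_from_count {E : Finset (Sym2 V)} (hnd : ∀ e ∈ E, ¬ e.IsDiag) {m : ℕ}
    (hm : m.choose 2 < E.card) : ∃ F ⊆ E, Good F ∧ m ≤ F.card := by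
  classical
  have hne : (E.powerset.filter Good).Nonempty :=
    ⟨∅, Finset.mem_filter.2 ⟨Finset.mem_powerset.2 (Finset.empty_subset E), good_empty⟩⟩
  obtain ⟨F, hFmem, hmax⟩ := Finset.exists_max_image _ Finset.card hne
  rw [Finset.mem_filter, Finset.mem_powerset] at hFmem
  refine ⟨F, hFmem.1, hFmem.2, ?_⟩
  by_contra hlt
  push_neg at hlt
  have hEP : E ⊆ prs F := by
    intro e he
    refine Finset.mem_filter.2 ⟨Finset.mem_univ _, hnd e he, ?_⟩
    intro x y hxy
    subst hxy
    have hxyne : x ≠ y := fun h => hnd _ he (by rw [h]; exact Sym2.mk_isDiag_iff.2 rfl)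
    by_contra hre
    have hmemF : s(x, y) ∉ F := fun hmem =>
      hre ((Gr_adj.2 ⟨hmem, hxyne⟩ : (Gr F).Adj x y)).reachable
    have hgood := good_insert hFmem.2 hxyne hre
    have := hmax (insert s(x, y) F) (Finset.mem_filter.2
      ⟨Finset.mem_powerset.2 (Finset.insert_subset he hFmem.1), hgood⟩)
    rw [Finset.card_insert_of_notMem hmemF] at this
    omega
  have h1 : E.card ≤ (prs F).card := Finset.card_le_card hEP
  have h2 := card_prs_le hFmem.2
  have h3 : (F.card + 1).choose 2 ≤ m.choose 2 := Nat.choose_le_choose 2 (by omega)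
  omega


/-- Base case of Rado: all sets are singletons. -/
lemma rado_base {ι : Type*} [Fintype ι] [DecidableEq ι] (A : ι → Finset (Sym2 V))
    (hrk : ∀ S : Finset ι, ∃ F ⊆ S.biUnion A, Good F ∧ S.card ≤ F.card)
    (hsmall : ∀ i, (A i).card ≤ 1) :
    ∃ f : ι → Sym2 V, Function.Injective f ∧ (∀ i, f i ∈ A i) ∧
      Good (Finset.image f Finset.univ) := by
  have hone : ∀ i, ∃ e, A i = {e} := by
    intro i
    obtain ⟨F, hFs, hFg, hFc⟩ := hrk {i}
    rw [Finset.singleton_biUnion] at hFs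
    rw [Finset.card_singleton] at hFc
    have : 1 ≤ (A i).card := le_trans hFc (Finset.card_le_card hFs)
    exact Finset.card_eq_one.1 (le_antisymm (hsmall i) this)
  choose f hf using hone
  obtain ⟨F, hFs, hFg, hFc⟩ := hrk Finset.univ
  have hU : Finset.univ.biUnion A = Finset.image f Finset.univ := by
    ext e
    constructor
    · intro he
      obtain ⟨i, -, hi⟩ := Finset.mem_biUnion.1 he
      exact Finset.mem_image.2 ⟨i, Finset.mem_univ i,
        by rw [hf i] at hi; exact (Finset.mem_singleton.1 hi).symm⟩
    · intro he
      obtain ⟨i, -, rfl⟩ := Finset.mem_image.1 he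
      exact Finset.mem_biUnion.2 ⟨i, Finset.mem_univ i,
        by rw [hf i]; exact Finset.mem_singleton_self _⟩
  rw [hU] at hFs
  have hcard1 : (Finset.image f Finset.univ).card ≤ Fintype.card ι :=
    calc (Finset.image f Finset.univ).card ≤ (Finset.univ : Finset ι).card :=
        Finset.card_image_le
      _ = Fintype.card ι := Finset.card_univ
  rw [Finset.card_univ] at hFc
  have hFU : F = Finset.image f Finset.univ :=
    Finset.eq_of_subset_of_card_le hFs (le_trans hcard1 hFc)
  have hic : Fintype.card ι ≤ (Finset.image f Finset.univ).card := by
    rw [← hFU]; exact hFc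
  have himg : (Finset.image f Finset.univ).card = (Finset.univ : Finset ι).card := by
    rw [Finset.card_univ]; exact le_antisymm hcard1 hic
  have hinj : Function.Injective f := by
    rw [Finset.card_image_iff] at himg
    intro a b hab
    exact himg (by simp) (by simp) hab
  exact ⟨f, hinj, fun i => by rw [hf i]; exact Finset.mem_singleton_self _, hFU ▸ hFg⟩

/-- Rado's theorem for the graphic matroid, by induction on the total size. -/
lemma rado_aux {ι : Type*} [Fintype ι] [DecidableEq ι] (N : ℕ) :
    ∀ A : ι → Finset (Sym2 V), (∑ i, (A i).card) ≤ N →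
      (∀ i, ∀ e ∈ A i, ¬ e.IsDiag) →
      (∀ S : Finset ι, ∃ F ⊆ S.biUnion A, Good F ∧ S.card ≤ F.card) →
      ∃ f : ι → Sym2 V, Function.Injective f ∧ (∀ i, f i ∈ A i) ∧
        Good (Finset.image f Finset.univ) := by
  induction N with
  | zero =>
    intro A hsum _ hrk
    exact rado_base A hrk (fun i => by
      have := Finset.sum_le_sum_of_subset (f := fun j => (A j).card)
        (Finset.subset_univ {i})
      simp only [Finset.sum_singleton] at this
      omega)
  | succ N ih =>
    intro A hsum hnd hrk
    by_cases hsmall : ∀ i, (A i).card ≤ 1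
    · exact rado_base A hrk hsmall
    push_neg at hsmall
    obtain ⟨i0, hi0⟩ := hsmall
    obtain ⟨x, hx, y, hy, hxy⟩ := Finset.one_lt_card.1 hi0
    -- the two candidate shrunken families
    set Ax := Function.update A i0 ((A i0).erase x) with hAx
    set Ay := Function.update A i0 ((A i0).erase y) with hAy
    have hsum' : ∀ z (hz : z ∈ A i0), (∑ i, ((Function.update A i0 ((A i0).erase z)) i).card) ≤ N := by
      intro z hz
      rw [← Finset.add_sum_erase Finset.univ _ (Finset.mem_univ i0)]
      rw [← Finset.add_sum_erase Finset.univ _ (Finset.mem_univ i0)] at hsum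
      have hcongr : ∑ i ∈ Finset.univ.erase i0,
          ((Function.update A i0 ((A i0).erase z)) i).card = ∑ i ∈ Finset.univ.erase i0, (A i).card :=
        Finset.sum_congr rfl (fun i hi => by
          rw [Function.update_of_ne (Finset.ne_of_mem_erase hi)])
      rw [hcongr, Function.update_self, Finset.card_erase_of_mem hz]
      omega
    have hnd' : ∀ z, ∀ i, ∀ e ∈ (Function.update A i0 ((A i0).erase z)) i, ¬ e.IsDiag := by
      intro z i e he
      by_cases h : i = i0
      · subst h
        rw [Function.update_self] at he
        exact hnd i e (Finset.erase_subset _ _ he)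
      · rw [Function.update_of_ne h] at he
        exact hnd i e he
    by_cases hcx : ∀ S : Finset ι, ∃ F ⊆ S.biUnion Ax, Good F ∧ S.card ≤ F.card
    · obtain ⟨f, h1, h2, h3⟩ := ih Ax (hsum' x hx) (hnd' x) hcx
      refine ⟨f, h1, fun i => ?_, h3⟩
      have := h2 i
      by_cases h : i = i0
      · rw [hAx, h, Function.update_self] at this
        rw [h]; exact Finset.erase_subset _ _ this
      · rwa [hAx, Function.update_of_ne h] at this
    by_cases hcy : ∀ S : Finset ι, ∃ F ⊆ S.biUnion Ay, Good F ∧ S.card ≤ F.card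
    · obtain ⟨f, h1, h2, h3⟩ := ih Ay (hsum' y hy) (hnd' y) hcy
      refine ⟨f, h1, fun i => ?_, h3⟩
      have := h2 i
      by_cases h : i = i0
      · rw [hAy, h, Function.update_self] at this
        rw [h]; exact Finset.erase_subset _ _ this
      · rwa [hAy, Function.update_of_ne h] at this
    -- both fail: derive a contradiction via submodularity
    exfalso
    push_neg at hcx hcy
    obtain ⟨Sx, hSx⟩ := hcx
    obtain ⟨Sy, hSy⟩ := hcy
    have hmemx : i0 ∈ Sx := by
      by_contra h
      obtain ⟨F, hFs, hFg, hFc⟩ := hrk Sx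
      have heq : Sx.biUnion Ax = Sx.biUnion A :=
        Finset.biUnion_congr rfl (fun i hi => by
          rw [hAx, Function.update_of_ne (fun he => h (by rw [← he]; exact hi))])
      have := hSx F (heq ▸ hFs) hFg
      omega
    have hmemy : i0 ∈ Sy := by
      by_contra h
      obtain ⟨F, hFs, hFg, hFc⟩ := hrk Sy
      have heq : Sy.biUnion Ay = Sy.biUnion A :=
        Finset.biUnion_congr rfl (fun i hi => by
          rw [hAy, Function.update_of_ne (fun he => h (by rw [← he]; exact hi))])
      have := hSy F (heq ▸ hFs) hFg
      omega
    set X := Sx.biUnion Ax with hX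
    set Y := Sy.biUnion Ay with hY
    obtain ⟨FU, hFUs, hFUg, hFUc⟩ := hrk (Sx ∪ Sy)
    obtain ⟨FI, hFIs, hFIg, hFIc⟩ := hrk ((Sx ∩ Sy).erase i0)
    have hFIX : FI ⊆ X := by
      refine hFIs.trans ?_
      intro e he
      obtain ⟨i, hi, hei⟩ := Finset.mem_biUnion.1 he
      have hne : i ≠ i0 := Finset.ne_of_mem_erase hi
      have hiSx : i ∈ Sx := (Finset.mem_inter.1 (Finset.mem_of_mem_erase hi)).1
      exact Finset.mem_biUnion.2 ⟨i, hiSx, by rw [hAx, Function.update_of_ne hne]; exact hei⟩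
    have hFIY : FI ⊆ Y := by
      refine hFIs.trans ?_
      intro e he
      obtain ⟨i, hi, hei⟩ := Finset.mem_biUnion.1 he
      have hne : i ≠ i0 := Finset.ne_of_mem_erase hi
      have hiSy : i ∈ Sy := (Finset.mem_inter.1 (Finset.mem_of_mem_erase hi)).2
      exact Finset.mem_biUnion.2 ⟨i, hiSy, by rw [hAy, Function.update_of_ne hne]; exact hei⟩
    have hFUXY : FU ⊆ X ∪ Y := by
      refine hFUs.trans ?_
      intro e he
      obtain ⟨i, hi, hei⟩ := Finset.mem_biUnion.1 he
      by_cases h : i = i0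
      · by_cases hex : e = x
        · refine Finset.mem_union_right _ (Finset.mem_biUnion.2 ⟨i0, hmemy, ?_⟩)
          rw [hAy, Function.update_self]
          exact Finset.mem_erase.2 ⟨by rw [hex]; exact hxy, h ▸ hei⟩
        · refine Finset.mem_union_left _ (Finset.mem_biUnion.2 ⟨i0, hmemx, ?_⟩)
          rw [hAx, Function.update_self]
          exact Finset.mem_erase.2 ⟨hex, h ▸ hei⟩
      · rcases Finset.mem_union.1 hi with hi' | hi'
        · exact Finset.mem_union_left _ (Finset.mem_biUnion.2 ⟨i, hi', by
            rw [hAx, Function.update_of_ne h]; exact hei⟩)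
        · exact Finset.mem_union_right _ (Finset.mem_biUnion.2 ⟨i, hi', by
            rw [hAy, Function.update_of_ne h]; exact hei⟩)
    obtain ⟨C, hC1, hC2, hCg, hCc⟩ := extend_aux FU.card FI FU hFIg hFUg (by omega)
    have hCXY : C ⊆ X ∪ Y :=
      hC2.trans (Finset.union_subset (hFIX.trans Finset.subset_union_left) hFUXY)
    have hbX : (C ∩ X).card < Sx.card :=
      hSx (C ∩ X) Finset.inter_subset_right (good_subset Finset.inter_subset_left hCg)
    have hbY : (C ∩ Y).card < Sy.card :=
      hSy (C ∩ Y) Finset.inter_subset_right (good_subset Finset.inter_subset_left hCg)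
    have hunion : (C ∩ X) ∪ (C ∩ Y) = C := by
      rw [← Finset.inter_union_distrib_left]
      exact Finset.inter_eq_left.2 hCXY
    have hinterge : FI ⊆ (C ∩ X) ∩ (C ∩ Y) := by
      intro e he
      exact Finset.mem_inter.2 ⟨Finset.mem_inter.2 ⟨hC1 he, hFIX he⟩,
        Finset.mem_inter.2 ⟨hC1 he, hFIY he⟩⟩
    have key := Finset.card_union_add_card_inter (C ∩ X) (C ∩ Y)
    rw [hunion] at key
    have h1 : FI.card ≤ ((C ∩ X) ∩ (C ∩ Y)).card := Finset.card_le_card hinterge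
    have h2 : (Sx ∩ Sy).card - 1 ≤ FI.card := by
      rw [Finset.card_erase_of_mem (Finset.mem_inter.2 ⟨hmemx, hmemy⟩)] at hFIc
      omega
    have h3 := Finset.card_union_add_card_inter Sx Sy
    have h4 : 1 ≤ (Sx ∩ Sy).card :=
      Finset.card_pos.2 ⟨i0, Finset.mem_inter.2 ⟨hmemx, hmemy⟩⟩
    have h5 : (Sx ∪ Sy).card ≤ FU.card := hFUc
    omega


end CBT

theorem stmt_5 (k t : ℕ) (hk : 1 ≤ k) (ht : 1 ≤ t)
    (c : Sym2 (Fin (2 * k * t + 1)) → Fin k)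
    (hcond : ∀ S : Finset (Fin k), S.Nonempty →
      (2 * S.card * t).choose 2 <
        {e ∈ (⊤ : SimpleGraph (Fin (2 * k * t + 1))).edgeSet | c e ∈ S}.ncard) :
    ∃ T : SimpleGraph (Fin (2 * k * t + 1)), T.IsTree ∧
      ∀ i : Fin k, {e ∈ T.edgeSet | c e = i}.ncard = 2 * t := by
  classical
  have hkpos : 0 < k := hk
  set E : Fin k → Finset (Sym2 (Fin (2 * k * t + 1))) :=
    fun i => Finset.univ.filter (fun e => ¬ e.IsDiag ∧ c e = i) with hE
  have hrk : ∀ S' : Finset (Fin k × Fin (2 * t)), ∃ F ⊆ S'.biUnion (fun p => E p.1),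
      Good F ∧ S'.card ≤ F.card := by
    intro S'
    rcases S'.eq_empty_or_nonempty with rfl | hne
    · exact ⟨∅, by simp, good_empty, by simp⟩
    set S1 := S'.image Prod.fst with hS1
    have hS1ne : S1.Nonempty := hne.image _
    have hc := hcond S1 hS1ne
    set ES1 : Finset (Sym2 (Fin (2 * k * t + 1))) :=
      Finset.univ.filter (fun e => ¬ e.IsDiag ∧ c e ∈ S1) with hES1
    have hset : {e ∈ (⊤ : SimpleGraph (Fin (2 * k * t + 1))).edgeSet | c e ∈ S1} = ↑ES1 := by
      ext e
      simp only [Set.mem_setOf_eq, SimpleGraph.edgeSet_top, hES1, Finset.coe_filter,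
        Finset.mem_univ, true_and, Set.mem_setOf_eq, Set.mem_compl_iff, Sym2.mem_diagSet]
    rw [hset, Set.ncard_coe_finset] at hc
    have hnd : ∀ e ∈ ES1, ¬ e.IsDiag := fun e he => (Finset.mem_filter.1 he).2.1
    obtain ⟨F, hFs, hFg, hFc⟩ := rank_from_count hnd hc
    have hbu : S'.biUnion (fun p => E p.1) = ES1 := by
      ext e
      simp only [Finset.mem_biUnion, hE, hES1, Finset.mem_filter, Finset.mem_univ, true_and]
      constructor
      · rintro ⟨p, hp, hd, hc'⟩
        exact ⟨hd, hc' ▸ Finset.mem_image_of_mem Prod.fst hp⟩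
      · rintro ⟨hd, hmem⟩
        obtain ⟨p, hp, hp1⟩ := Finset.mem_image.1 hmem
        exact ⟨p, hp, hd, hp1.symm⟩
    refine ⟨F, by rw [hbu]; exact hFs, hFg, ?_⟩
    have hsub : S' ⊆ S1 ×ˢ (Finset.univ : Finset (Fin (2 * t))) := by
      intro p hp
      exact Finset.mem_product.2 ⟨Finset.mem_image_of_mem Prod.fst hp, Finset.mem_univ _⟩
    have hcard : S'.card ≤ S1.card * (2 * t) := by
      have := Finset.card_le_card hsub
      rwa [Finset.card_product, Finset.card_univ, Fintype.card_fin] at this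
    have : S1.card * (2 * t) = 2 * S1.card * t := by ring
    omega
  obtain ⟨f, hfinj, hfmem, hfgood⟩ := rado_aux (ι := Fin k × Fin (2 * t))
    (∑ p : Fin k × Fin (2 * t), (E p.1).card) (fun p => E p.1) le_rfl
    (fun p e he => (Finset.mem_filter.1 he).2.1) hrk
  set F := Finset.image f Finset.univ with hF
  have hcardF : F.card = 2 * k * t := by
    rw [hF, Finset.card_image_of_injective _ hfinj, Finset.card_univ]
    simp only [Fintype.card_prod, Fintype.card_fin]
    ring
  have hn : Fintype.card (Fin (2 * k * t + 1)) = 2 * k * t + 1 := Fintype.card_fin _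
  have hreps : (reps F).card = 1 := by
    have := card_forest hfgood
    omega
  have hconn : (Gr F).Connected := by
    rw [SimpleGraph.connected_iff]
    refine ⟨?_, ⟨⟨0, by omega⟩⟩⟩
    intro x y
    have h1 : rep F x = rep F y :=
      Finset.card_le_one.1 (le_of_eq hreps) _ (rep_mem_reps F x) _ (rep_mem_reps F y)
    exact (reach_rep F x).trans (h1 ▸ (reach_rep F y).symm)
  refine ⟨Gr F, ⟨hconn, hfgood.1⟩, ?_⟩
  intro i
  have hTset : {e ∈ (Gr F).edgeSet | c e = i} = ↑(F.filter (fun e => c e = i)) := by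
    ext e
    simp only [Set.mem_setOf_eq, Gr, SimpleGraph.edgeSet_fromEdgeSet, Set.mem_diff,
      Set.mem_setOf_eq, Finset.coe_filter, Finset.mem_coe]
    constructor
    · rintro ⟨⟨he, -⟩, hc'⟩; exact ⟨he, hc'⟩
    · rintro ⟨he, hc'⟩; exact ⟨⟨he, hfgood.2 e he⟩, hc'⟩
  rw [hTset, Set.ncard_coe_finset]
  have himg : F.filter (fun e => c e = i) =
      Finset.image (fun j : Fin (2 * t) => f (i, j)) Finset.univ := by
    ext e
    constructor
    · intro he
      obtain ⟨he1, he2⟩ := Finset.mem_filter.1 he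
      obtain ⟨p, -, rfl⟩ := Finset.mem_image.1 he1
      have : c (f p) = p.1 := (Finset.mem_filter.1 (hfmem p)).2.2
      have hp1 : p.1 = i := by rw [← this, he2]
      exact Finset.mem_image.2 ⟨p.2, Finset.mem_univ _, by rw [← hp1]⟩
    · intro he
      obtain ⟨j, -, rfl⟩ := Finset.mem_image.1 he
      refine Finset.mem_filter.2 ⟨Finset.mem_image_of_mem f (Finset.mem_univ _), ?_⟩
      exact (Finset.mem_filter.1 (hfmem (i, j))).2.2
  have hinj2 : Function.Injective (fun j : Fin (2 * t) => f (i, j)) := by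
    intro a b hab
    have := hfinj hab
    exact congrArg Prod.snd this
  rw [himg, Finset.card_image_of_injective _ hinj2, Finset.card_univ, Fintype.card_fin]
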